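/- Let X and Y be random variables on a probability space (Θ, 𝓕, P) taking values in standard Borel spaces 𝒳 and 𝒴 respectively, with marginal laws μ_X and μ_Y, joint law μ_{X,Y}, and regular conditional distributions μ_{Y|X=x} (the conditional distribution of Y given X) and μ_{X|Y=y}. Then the following are equivalent: (a) μ_{Y|X=x} ≪ μ_Y for μ_X-almost every x; (b) μ_{X|Y=y} ≪ μ_X for μ_Y-almost every y; (c) μ_{X,Y} ≪ μ_X ⊗ μ_Y. -/

import Mathlib

open MeasureTheory ProbabilityTheory

open scoped ENNReal

/-- Key lemma: for a finite measure `μ`, a finite kernel `κ` and a finite measure `ν`,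
`μ ⊗ₘ κ ≪ μ.prod ν` iff `κ a ≪ ν` for `μ`-a.e. `a`. -/
lemma ac_compProd_iff_ae_ac
    {α γ : Type*} {mα : MeasurableSpace α} {mγ : MeasurableSpace γ}
    [MeasurableSpace.CountablyGenerated γ]
    (μ : Measure α) [IsFiniteMeasure μ] (κ : Kernel α γ) [IsFiniteKernel κ]
    (ν : Measure γ) [IsFiniteMeasure ν] :
    (∀ᵐ a ∂μ, κ a ≪ ν) ↔ μ ⊗ₘ κ ≪ μ.prod ν := by
  rw [← Measure.compProd_const]
  constructor
  · intro h
    exact Measure.AbsolutelyContinuous.compProd_right h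
  · intro h
    set η : Kernel α γ := Kernel.const α ν with hη
    set ξ : Kernel α γ := κ.singularPart η with hξ
    -- `μ ⊗ₘ ξ ≪ μ ⊗ₘ η` since `ξ ≤ κ`
    have hle : ∀ a, ξ a ≤ κ a := by
      intro a
      conv_rhs => rw [← Kernel.rnDeriv_add_singularPart κ η]
      intro s
      simp only [hξ, Kernel.coe_add, Pi.add_apply, Measure.coe_add]
      exact le_add_self
    have hac : μ ⊗ₘ ξ ≪ μ ⊗ₘ η := by
      refine Measure.AbsolutelyContinuous.trans ?_ h
      refine Measure.AbsolutelyContinuous.mk fun s hs hs0 ↦ ?_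
      rw [Measure.compProd_apply hs] at hs0 ⊢
      refine le_antisymm ?_ zero_le
      rw [← hs0]
      refine lintegral_mono fun a ↦ hle a _
    -- `μ ⊗ₘ ξ ⟂ₘ μ ⊗ₘ η`
    have hsing : μ ⊗ₘ ξ ⟂ₘ μ ⊗ₘ η := by
      refine ⟨(Kernel.mutuallySingularSet κ η)ᶜ,
        (Kernel.measurableSet_mutuallySingularSet κ η).compl, ?_, ?_⟩
      · rw [Measure.compProd_apply (Kernel.measurableSet_mutuallySingularSet κ η).compl]
        refine lintegral_eq_zero_iff ?_ |>.mpr ?_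
        · exact Kernel.measurable_kernel_prodMk_left
            (Kernel.measurableSet_mutuallySingularSet κ η).compl
        · exact Filter.Eventually.of_forall fun a ↦
            Kernel.singularPart_compl_mutuallySingularSetSlice κ η a
      · rw [compl_compl, Measure.compProd_apply (Kernel.measurableSet_mutuallySingularSet κ η)]
        refine lintegral_eq_zero_iff ?_ |>.mpr ?_
        · exact Kernel.measurable_kernel_prodMk_left
            (Kernel.measurableSet_mutuallySingularSet κ η)
        · exact Filter.Eventually.of_forall fun a ↦
            Kernel.measure_mutuallySingularSetSlice κ η a
    have hzero : μ ⊗ₘ ξ = 0 := Measure.eq_zero_of_absolutelyContinuous_of_mutuallySingular hac hsing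
    -- hence a.e. `ξ a = 0`, i.e. `κ a ≪ ν`
    have h0 : ∀ᵐ a ∂μ, ξ a Set.univ = 0 := by
      have huniv : (μ ⊗ₘ ξ) Set.univ = 0 := by rw [hzero]; rfl
      rw [Measure.compProd_apply MeasurableSet.univ] at huniv
      have huniv' : ∫⁻ a, ξ a Set.univ ∂μ = 0 := by simpa using huniv
      filter_upwards [(lintegral_eq_zero_iff
        (Kernel.measurable_coe ξ MeasurableSet.univ)).mp huniv'] with a ha
      simpa using ha
    filter_upwards [h0] with a ha
    have hξ0 : ξ a = 0 := Measure.measure_univ_eq_zero.mp ha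
    have hd : Kernel.withDensity η (Kernel.rnDeriv κ η) a + ξ a = κ a := by
      conv_rhs => rw [← Kernel.rnDeriv_add_singularPart κ η]
      simp [hξ]
    rw [hξ0, add_zero] at hd
    rw [← hd, Kernel.withDensity_apply _ (Kernel.measurable_rnDeriv κ η)]
    have : η a = ν := rfl
    rw [this]
    exact MeasureTheory.withDensity_absolutelyContinuous _ _

lemma joint_eq_compProd_condDistrib
    {Θ 𝒳 𝒴 : Type*} [MeasurableSpace Θ]
    [MeasurableSpace 𝒳]
    [MeasurableSpace 𝒴] [StandardBorelSpace 𝒴] [Nonempty 𝒴]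
    (P : Measure Θ) [IsProbabilityMeasure P]
    (X : Θ → 𝒳) (Y : Θ → 𝒴) (hX : Measurable X) (hY : Measurable Y) :
    P.map (fun θ => (X θ, Y θ)) = (P.map X) ⊗ₘ condDistrib Y X P := by
  have h1 : (P.map fun θ => (X θ, Y θ)).fst = P.map X := Measure.fst_map_prodMk hY
  conv_lhs => rw [← Measure.disintegrate (P.map fun θ => (X θ, Y θ)) (P.map fun θ => (X θ, Y θ)).condKernel]
  rw [h1, condDistrib_def]

/-- For random variables `X`, `Y` with values in standard Borel spaces,
the following are equivalent: (a) `μ_{Y|X=x} ≪ μ_Y` for `μ_X`-a.e. `x`;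
(b) `μ_{X|Y=y} ≪ μ_X` for `μ_Y`-a.e. `y`; (c) `μ_{X,Y} ≪ μ_X ⊗ μ_Y`. -/
theorem condDistrib_ac_iff_ac_iff_joint_ac
    {Θ 𝒳 𝒴 : Type*} [MeasurableSpace Θ]
    [MeasurableSpace 𝒳] [StandardBorelSpace 𝒳] [Nonempty 𝒳]
    [MeasurableSpace 𝒴] [StandardBorelSpace 𝒴] [Nonempty 𝒴]
    (P : Measure Θ) [IsProbabilityMeasure P]
    (X : Θ → 𝒳) (Y : Θ → 𝒴) (hX : Measurable X) (hY : Measurable Y) :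
    ((∀ᵐ x ∂(P.map X), condDistrib Y X P x ≪ P.map Y) ↔
        (∀ᵐ y ∂(P.map Y), condDistrib X Y P y ≪ P.map X)) ∧
      ((∀ᵐ x ∂(P.map X), condDistrib Y X P x ≪ P.map Y) ↔
        P.map (fun θ => (X θ, Y θ)) ≪ (P.map X).prod (P.map Y)) := by
  have hXY := joint_eq_compProd_condDistrib P X Y hX hY
  have hYX := joint_eq_compProd_condDistrib P Y X hY hX
  have h2 : (∀ᵐ x ∂(P.map X), condDistrib Y X P x ≪ P.map Y) ↔
      P.map (fun θ => (X θ, Y θ)) ≪ (P.map X).prod (P.map Y) := by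
    rw [ac_compProd_iff_ae_ac (P.map X) (condDistrib Y X P) (P.map Y), ← hXY]
  have h2' : (∀ᵐ y ∂(P.map Y), condDistrib X Y P y ≪ P.map X) ↔
      P.map (fun θ => (Y θ, X θ)) ≪ (P.map Y).prod (P.map X) := by
    rw [ac_compProd_iff_ae_ac (P.map Y) (condDistrib X Y P) (P.map X), ← hYX]
  have hswapmap : P.map (fun θ => (Y θ, X θ)) =
      (P.map (fun θ => (X θ, Y θ))).map Prod.swap := by
    rw [Measure.map_map measurable_swap (hX.prodMk hY)]
    rfl
  have hswapprod : ((P.map X).prod (P.map Y)).map Prod.swap = (P.map Y).prod (P.map X) :=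
    Measure.prod_swap
  have hsw : (P.map (fun θ => (X θ, Y θ)) ≪ (P.map X).prod (P.map Y)) ↔
      (P.map (fun θ => (Y θ, X θ)) ≪ (P.map Y).prod (P.map X)) := by
    constructor
    · intro h
      rw [hswapmap, ← hswapprod]
      exact h.map measurable_swap
    · intro h
      have := h.map (measurable_swap : Measurable (Prod.swap : 𝒴 × 𝒳 → 𝒳 × 𝒴))
      have hm2 : (P.map (fun θ => (Y θ, X θ))).map Prod.swap =
          P.map (fun θ => (X θ, Y θ)) := by
        rw [Measure.map_map measurable_swap (hY.prodMk hX)]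
        rfl
      rwa [hm2, Measure.prod_swap] at this
  exact ⟨h2.trans (hsw.trans h2'.symm), h2⟩
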